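/- The chordal metric on ℝⁿ is Ptolemaic: for all x1, x2, x3, x4 ∈ ℝⁿ one has d̄(x1,x2)·d̄(x3,x4) ≤ d̄(x2,x4)·d̄(x1,x3) + d̄(x1,x4)·d̄(x2,x3). -/

import Mathlib

/-- The chordal metric on `ℝⁿ`, arising from the unit Riemann sphere. -/
noncomputable def chordalDist {n : ℕ} (x y : EuclideanSpace ℝ (Fin n)) : ℝ :=
  2 * ‖x - y‖ / (Real.sqrt (1 + ‖x‖ ^ 2) * Real.sqrt (1 + ‖y‖ ^ 2))

/-- The chordal metric on `ℝⁿ` is Ptolemaic. -/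
theorem chordal_ptolemaic {n : ℕ} (x1 x2 x3 x4 : EuclideanSpace ℝ (Fin n)) :
    chordalDist x1 x2 * chordalDist x3 x4 ≤
      chordalDist x2 x4 * chordalDist x1 x3 + chordalDist x1 x4 * chordalDist x2 x3 := by
  have hP := EuclideanGeometry.mul_dist_le_mul_dist_add_mul_dist x1 x3 x2 x4
  simp only [dist_eq_norm] at hP
  rw [norm_sub_rev x3 x2] at hP
  unfold chordalDist
  set s1 := Real.sqrt (1 + ‖x1‖ ^ 2) with hs1
  set s2 := Real.sqrt (1 + ‖x2‖ ^ 2) with hs2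
  set s3 := Real.sqrt (1 + ‖x3‖ ^ 2) with hs3
  set s4 := Real.sqrt (1 + ‖x4‖ ^ 2) with hs4
  have h1 : 0 < s1 := Real.sqrt_pos.2 (by positivity)
  have h2 : 0 < s2 := Real.sqrt_pos.2 (by positivity)
  have h3 : 0 < s3 := Real.sqrt_pos.2 (by positivity)
  have h4 : 0 < s4 := Real.sqrt_pos.2 (by positivity)
  have hD : 0 < s1 * s2 * s3 * s4 := by positivity
  have key : 2 * ‖x1 - x2‖ * (2 * ‖x3 - x4‖) ≤
      2 * ‖x2 - x4‖ * (2 * ‖x1 - x3‖) + 2 * ‖x1 - x4‖ * (2 * ‖x2 - x3‖) := by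
    nlinarith [hP]
  calc 2 * ‖x1 - x2‖ / (s1 * s2) * (2 * ‖x3 - x4‖ / (s3 * s4))
      = (2 * ‖x1 - x2‖ * (2 * ‖x3 - x4‖)) / (s1 * s2 * s3 * s4) := by ring
    _ ≤ (2 * ‖x2 - x4‖ * (2 * ‖x1 - x3‖) + 2 * ‖x1 - x4‖ * (2 * ‖x2 - x3‖)) /
        (s1 * s2 * s3 * s4) := by gcongr
    _ = 2 * ‖x2 - x4‖ / (s2 * s4) * (2 * ‖x1 - x3‖ / (s1 * s3)) +
        2 * ‖x1 - x4‖ / (s1 * s4) * (2 * ‖x2 - x3‖ / (s2 * s3)) := by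
          field_simp
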